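/- Let ā ∈ R^K, Ā a (p-1)×K matrix of full column rank, Σ_U a (p-1)×(p-1) positive definite matrix, Ḡ := I_K + Ā'Σ_U^{-1}Ā, and α* := Σ_U^{-1} Ā Ḡ^{-1} ā. Then ‖α*‖₂² ≤ (ā' Ḡ^{-1} ā) / λ_min(Σ_U), where λ_min(Σ_U) is the smallest eigenvalue of Σ_U. -/

import Mathlib

open Matrix

/-- Rayleigh-type lower bound: λ_min(S) * ‖w‖² ≤ wᵀ S w for S positive definite. -/
lemma rayleigh_lower_aux {n : ℕ} {S : Matrix (Fin n) (Fin n) ℝ} (hS : S.PosDef)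
    (w : Fin n → ℝ) :
    (⨅ i, hS.1.eigenvalues i) * (w ⬝ᵥ w) ≤ w ⬝ᵥ (S *ᵥ w) := by
  classical
  set U : Matrix (Fin n) (Fin n) ℝ := (hS.1.eigenvectorUnitary : Matrix (Fin n) (Fin n) ℝ) with hUdef
  set lam : Fin n → ℝ := hS.1.eigenvalues with hlam
  set y : Fin n → ℝ := star U *ᵥ w with hy
  have hU1 : U * star U = 1 :=
    Unitary.mul_star_self_of_mem (hS.1.eigenvectorUnitary).2
  -- y ᵥ* star U = U *ᵥ y
  have hvm : ∀ z : Fin n → ℝ, z ᵥ* star U = U *ᵥ z := by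
    intro z
    have := Matrix.star_mulVec (M := U) (v := z)
    simpa [Matrix.star_eq_conjTranspose] using this.symm
  have hwU : w ᵥ* U = y := by
    have := Matrix.mulVec_conjTranspose (A := U) (x := w)
    simpa [hy, Matrix.star_eq_conjTranspose] using this.symm
  have hww : w ⬝ᵥ w = y ⬝ᵥ y := by
    have : y ⬝ᵥ y = (U *ᵥ y) ⬝ᵥ w := by
      rw [hy, Matrix.dotProduct_mulVec, hvm]
    rw [this, hy, Matrix.mulVec_mulVec, hU1, Matrix.one_mulVec, dotProduct_comm]
  have hq : w ⬝ᵥ (S *ᵥ w) = ∑ i, lam i * y i ^ 2 := by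
    conv_lhs => rw [hS.1.spectral_theorem, Unitary.conjStarAlgAut_apply]
    rw [← Matrix.mulVec_mulVec, ← Matrix.mulVec_mulVec, Matrix.dotProduct_mulVec, hwU, ← hy]
    simp [dotProduct, Matrix.mulVec_diagonal, hlam]
    congr 1
    ext i
    ring
  have hbdd : BddBelow (Set.range lam) := Set.Finite.bddBelow (Set.finite_range _)
  have hle : ∀ i, (⨅ j, lam j) ≤ lam i := fun i => ciInf_le hbdd i
  rw [hq, hww, dotProduct, Finset.mul_sum]
  apply Finset.sum_le_sum
  intro i _
  have h2 : y i * y i = y i ^ 2 := by ring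
  rw [h2]
  exact mul_le_mul_of_nonneg_right (hle i) (sq_nonneg _)

/-- Bound on the squared ℓ² norm of α* = Σ_U⁻¹ Ā Ḡ⁻¹ ā:
‖α*‖₂² ≤ (ā' Ḡ⁻¹ ā) / λ_min(Σ_U). -/
theorem sq_norm_alpha_le {n K : ℕ}
    (Ab : Matrix (Fin n) (Fin K) ℝ) (hrank : Ab.rank = K)
    (SU : Matrix (Fin n) (Fin n) ℝ) (hU : SU.PosDef) (a : Fin K → ℝ) :
    ∑ i, (SU⁻¹ *ᵥ (Ab *ᵥ ((1 + Abᵀ * SU⁻¹ * Ab)⁻¹ *ᵥ a))) i ^ 2 ≤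
      (a ⬝ᵥ ((1 + Abᵀ * SU⁻¹ * Ab)⁻¹ *ᵥ a)) / (⨅ i, hU.1.eigenvalues i) := by
  classical
  set G : Matrix (Fin K) (Fin K) ℝ := 1 + Abᵀ * SU⁻¹ * Ab with hGdef
  set x : Fin K → ℝ := G⁻¹ *ᵥ a with hx
  set v : Fin n → ℝ := Ab *ᵥ x with hv
  set w : Fin n → ℝ := SU⁻¹ *ᵥ v with hw
  -- positive definiteness of G
  have hPSD : (Abᵀ * SU⁻¹ * Ab).PosSemidef := by
    have := (hU.inv).posSemidef.conjTranspose_mul_mul_same Ab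
    simpa [Matrix.conjTranspose_eq_transpose_of_trivial] using this
  have hG : G.PosDef := Matrix.PosDef.add_posSemidef Matrix.PosDef.one hPSD
  have hGx : G *ᵥ x = a := by
    rw [hx, Matrix.mulVec_mulVec,
      Matrix.mul_nonsing_inv G ((Matrix.isUnit_iff_isUnit_det G).mp hG.isUnit),
      Matrix.one_mulVec]
  have hSw : SU *ᵥ w = v := by
    rw [hw, Matrix.mulVec_mulVec,
      Matrix.mul_nonsing_inv SU ((Matrix.isUnit_iff_isUnit_det SU).mp hU.isUnit),
      Matrix.one_mulVec]
  -- w ⬝ᵥ (SU *ᵥ w) = x ⬝ᵥ a - x ⬝ᵥ x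
  have hM : Abᵀ * SU⁻¹ * Ab = G - 1 := by rw [hGdef, add_sub_cancel_left]
  have hMx : (Abᵀ * SU⁻¹ * Ab) *ᵥ x = a - x := by
    rw [hM, Matrix.sub_mulVec, hGx, Matrix.one_mulVec]
  have hvw : w ⬝ᵥ (SU *ᵥ w) = x ⬝ᵥ a - x ⬝ᵥ x := by
    have h1 : x ⬝ᵥ (Abᵀ *ᵥ w) = v ⬝ᵥ w := by
      rw [Matrix.dotProduct_mulVec, Matrix.vecMul_transpose, ← hv]
    have h2 : Abᵀ *ᵥ w = (Abᵀ * SU⁻¹ * Ab) *ᵥ x := by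
      rw [hw, hv, Matrix.mulVec_mulVec, Matrix.mulVec_mulVec, Matrix.mul_assoc]
    calc w ⬝ᵥ (SU *ᵥ w) = v ⬝ᵥ w := by rw [hSw, dotProduct_comm]
      _ = x ⬝ᵥ (Abᵀ *ᵥ w) := h1.symm
      _ = x ⬝ᵥ ((Abᵀ * SU⁻¹ * Ab) *ᵥ x) := by rw [h2]
      _ = x ⬝ᵥ (a - x) := by rw [hMx]
      _ = x ⬝ᵥ a - x ⬝ᵥ x := dotProduct_sub _ _ _
  have hxx : 0 ≤ x ⬝ᵥ x := Finset.sum_nonneg fun i _ => mul_self_nonneg _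
  have key : (⨅ i, hU.1.eigenvalues i) * (w ⬝ᵥ w) ≤ a ⬝ᵥ x := by
    calc (⨅ i, hU.1.eigenvalues i) * (w ⬝ᵥ w) ≤ w ⬝ᵥ (SU *ᵥ w) :=
          rayleigh_lower_aux hU w
      _ = x ⬝ᵥ a - x ⬝ᵥ x := hvw
      _ ≤ x ⬝ᵥ a := by linarith
      _ = a ⬝ᵥ x := dotProduct_comm _ _
  have hsum : ∑ i, w i ^ 2 = w ⬝ᵥ w := by
    simp [dotProduct, sq]
  rcases isEmpty_or_nonempty (Fin n) with hE | hNE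
  · simp [iInf_of_isEmpty, Real.sInf_empty]
  · have hpos : 0 < ⨅ i, hU.1.eigenvalues i := by
      obtain ⟨i, hi⟩ := exists_eq_ciInf_of_finite (f := fun i => hU.1.eigenvalues i)
      rw [← hi]
      exact hU.eigenvalues_pos i
    rw [le_div_iff₀ hpos, hsum, mul_comm]
    exact key
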